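/- arXiv:1909.13004 — 2 statements merged into one kernel-verified Lean document; each statement's English description precedes it below -/
import Mathlib

section
/- With Q(s_k) = [P(s_k|y*)/P(y_o|s_k)] / Σ_r [P(s_r|y*)/P(y_o|s_r)] and joint Q(y_o, s_k) = P(y_o|s_k)·Q(s_k), the marginal Q(y_o) = Σ_k Q(y_o, s_k) equals (Σ_r P(s_r|y*)/P(y_o|s_r))^{-1}, and the conditional Q(s_k|y_o) = Q(y_o, s_k)/Q(y_o) equals P(s_k|y*) for every k. -/
/-- With Q(s_k) as constructed, the marginal Q(y_o) = Σ_k P(y_o|s_k)·Q(s_k)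
equals (Σ_r P(s_r|y*)/P(y_o|s_r))⁻¹ and the conditional Q(s_k|y_o) equals P(s_k|y*). -/
theorem stmt_5 (m : ℕ) (hm : 0 < m) (p π : Fin m → ℝ)
    (hp : ∀ k, 0 < p k) (hpsum : ∑ k, p k = 1)
    (hπ0 : ∀ k, 0 < π k) (hπ1 : ∀ k, π k ≤ 1)
    (Q : Fin m → ℝ)
    (hQ : ∀ k, Q k = (p k / π k) / ∑ r, p r / π r)
    (Qjoint : Fin m → ℝ) (hQjoint : ∀ k, Qjoint k = π k * Q k)
    (Qy : ℝ) (hQy : Qy = ∑ k, Qjoint k) :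
    Qy = (∑ r, p r / π r)⁻¹ ∧ ∀ k, Qjoint k / Qy = p k := by
  set S : ℝ := ∑ r, p r / π r with hS
  have hSpos : 0 < S := by
    apply Finset.sum_pos
    · intro i _; exact div_pos (hp i) (hπ0 i)
    · exact Finset.univ_nonempty_iff.mpr ⟨⟨0, hm⟩⟩
  have hjoint : ∀ k, Qjoint k = p k / S := by
    intro k
    have h1 := (hπ0 k).ne'
    rw [hQjoint, hQ]
    field_simp
  have hQy' : Qy = S⁻¹ := by
    rw [hQy]
    simp only [hjoint, div_eq_mul_inv, ← Finset.sum_mul, hpsum, one_mul]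
  refine ⟨hQy', fun k => ?_⟩
  rw [hjoint, hQy', div_eq_mul_inv, inv_inv, div_mul_cancel₀ _ hSpos.ne']
end

section
/- For any fixed label o ∈ {0,1} and any data (likelihood vector p_k = P(s_k|y*) > 0 summing to 1, posteriors π_k = P(y_o|s_k) ∈ (0,1]), there exists a joint probability distribution Q on {0,1} × {1,...,m} such that Q's conditional distribution of labels given s_k assigns probability π_k to label o, and Q's conditional distribution of features given label o equals (p_k). In particular, the true label is not determined by the pair ((p_k), (π_k)). -/
lemma fin2_if_sum (o : Fin 2) (a b : ℝ) :
    ∑ i : Fin 2, (if i = o then a else b) = a + b := by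
  fin_cases o <;> simp [Fin.sum_univ_two, add_comm]

/-- For any label o ∈ {0,1} and data ((p_k),(π_k)) there exists a joint
distribution Q on {0,1} × {1,...,m} whose conditional of labels given s_k assigns
probability π_k to o, and whose conditional of features given label o equals (p_k). -/
theorem stmt_6 (m : ℕ) (hm : 0 < m) (o : Fin 2) (p π : Fin m → ℝ)
    (hp : ∀ k, 0 < p k) (hpsum : ∑ k, p k = 1)
    (hπ0 : ∀ k, 0 < π k) (hπ1 : ∀ k, π k ≤ 1) :
    ∃ Q : Fin 2 × Fin m → ℝ,
      (∀ z, 0 ≤ Q z) ∧ (∑ z, Q z = 1) ∧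
      (∀ k, 0 < ∑ o', Q (o', k) ∧ Q (o, k) / ∑ o', Q (o', k) = π k) ∧
      (0 < ∑ k, Q (o, k) ∧ ∀ k, Q (o, k) / ∑ k', Q (o, k') = p k) := by
  set S : ℝ := ∑ k, p k / π k with hS
  have hSpos : 0 < S := by
    apply Finset.sum_pos
    · intro k _; exact div_pos (hp k) (hπ0 k)
    · exact Finset.univ_nonempty_iff.mpr ⟨⟨0, hm⟩⟩
  set Qf : Fin 2 × Fin m → ℝ :=
    fun z => p z.2 / (S * π z.2) * (if z.1 = o then π z.2 else 1 - π z.2) with hQ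
  have hok : ∀ k, Qf (o, k) = p k / S := by
    intro k
    simp only [hQ, if_pos rfl]
    rw [div_mul_eq_mul_div]
    exact mul_div_mul_right _ _ (hπ0 k).ne'
  have hrow : ∀ k, (∑ o' : Fin 2, Qf (o', k)) = p k / (S * π k) := by
    intro k
    simp only [hQ]
    rw [← Finset.mul_sum, fin2_if_sum]
    ring_nf
  refine ⟨Qf, ?_, ?_, ?_, ?_⟩
  · intro z
    apply mul_nonneg
    · exact div_nonneg (hp z.2).le (mul_nonneg hSpos.le (hπ0 z.2).le)
    · split
      · exact (hπ0 z.2).le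
      · linarith [hπ1 z.2]
  · rw [Fintype.sum_prod_type_right]
    simp_rw [hrow]
    have : ∀ k : Fin m, p k / (S * π k) = p k / π k / S := by
      intro k
      rw [div_div, mul_comm]
    simp_rw [this]
    rw [← Finset.sum_div, ← hS, div_self hSpos.ne']
  · intro k
    constructor
    · rw [hrow]; exact div_pos (hp k) (mul_pos hSpos (hπ0 k))
    · rw [hrow, hok]
      have h1 : π k ≠ 0 := (hπ0 k).ne'
      have h2 : S ≠ 0 := hSpos.ne'
      have h3 : p k ≠ 0 := (hp k).ne'
      field_simp
  · simp_rw [hok]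
    constructor
    · apply Finset.sum_pos
      · intro k _; exact div_pos (hp k) hSpos
      · exact Finset.univ_nonempty_iff.mpr ⟨⟨0, hm⟩⟩
    · intro k
      rw [← Finset.sum_div, hpsum]
      field_simp
end
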